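/- Let μ be a probability measure on ∂H^m (m ≥ 2) without atoms, and for x ∈ H^m define 𝔅(x) = ∫_{∂H^m} B(x,θ) dμ(θ). Then 𝔅 is strictly convex along every non-constant geodesic, tends to +∞ as x → ∞, and hence admits a unique minimizer bar(μ) ∈ H^m. -/

import Mathlib

open MeasureTheory
open scoped RealInnerProductSpace

/-- The Minkowski bilinear form on `ℝ^{m+1}`. -/
noncomputable def mink (m : ℕ) (x y : Fin (m + 1) → ℝ) : ℝ :=
  (∑ i : Fin m, x i.succ * y i.succ) - x 0 * y 0

/-- The hyperboloid model of real hyperbolic `m`-space. -/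
def Hyp (m : ℕ) : Set (Fin (m + 1) → ℝ) := {x | mink m x x = -1 ∧ 0 < x 0}

/-- The null vector corresponding to a boundary point `θ ∈ S^{m-1}`. -/
noncomputable def nullVec (m : ℕ) (θ : EuclideanSpace ℝ (Fin m)) : Fin (m + 1) → ℝ :=
  Fin.cons 1 fun i => θ i

/-- The Busemann function of `H^m` (hyperboloid model), normalized at `(1,0,…,0)`. -/
noncomputable def Bus (m : ℕ) (x : Fin (m + 1) → ℝ) (θ : EuclideanSpace ℝ (Fin m)) : ℝ :=
  Real.log (-(mink m x (nullVec m θ)))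

namespace Bary

variable {m : ℕ}

/-- the spatial part of a vector, as a point of Euclidean space -/
def spatial (m : ℕ) (x : Fin (m + 1) → ℝ) : EuclideanSpace ℝ (Fin m) :=
  WithLp.toLp 2 (fun i : Fin m => x i.succ)

lemma inner_spatial (x : Fin (m + 1) → ℝ) (θ : EuclideanSpace ℝ (Fin m)) :
    ⟪spatial m x, θ⟫ = ∑ i : Fin m, x i.succ * θ i := by
  simp only [PiLp.inner_apply, RCLike.inner_apply, conj_trivial]
  exact Finset.sum_congr rfl fun i _ => mul_comm _ _

lemma mink_nullVec (x : Fin (m + 1) → ℝ) (θ : EuclideanSpace ℝ (Fin m)) :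
    mink m x (nullVec m θ) = ⟪spatial m x, θ⟫ - x 0 := by
  simp only [mink, nullVec, inner_spatial, Fin.cons_succ, Fin.cons_zero, mul_one]

lemma mink_self (x : Fin (m + 1) → ℝ) :
    mink m x x = ‖spatial m x‖ ^ 2 - (x 0) ^ 2 := by
  have : ⟪spatial m x, spatial m x⟫ = ‖spatial m x‖ ^ 2 := real_inner_self_eq_norm_sq _
  rw [← this, inner_spatial]
  simp [mink, spatial, sq]

lemma mink_comm (x y : Fin (m + 1) → ℝ) : mink m x y = mink m y x := by
  simp [mink, mul_comm]

lemma mink_add_smul (s t : ℝ) (x v y : Fin (m + 1) → ℝ) :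
    mink m (s • x + t • v) y = s * mink m x y + t * mink m v y := by
  simp only [mink, Pi.add_apply, Pi.smul_apply, smul_eq_mul]
  rw [mul_sub, mul_sub, Finset.mul_sum, Finset.mul_sum]
  rw [show ∀ a b c d : ℝ, a - b + (c - d) = (a + c) - (b + d) by intros; ring]
  rw [← Finset.sum_add_distrib]
  congr 1
  · exact Finset.sum_congr rfl fun i _ => by ring
  · ring

open Real Set
open scoped ENNReal


section conv
variable {α β : ℝ}

lemma combPos (hα : 0 ≤ α) (hβ : 0 ≤ β) (h : 0 < α + β) (t : ℝ) :
    0 < α * exp t + β * exp (-t) := by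
  rcases hα.lt_or_eq with h1 | h1
  · have := exp_pos t; have := exp_pos (-t); nlinarith
  · have hβ' : 0 < β := by rw [← h1] at h; simpa using h
    have := exp_pos t; have := exp_pos (-t); nlinarith

lemma hasDerivAt_logcomb (hα : 0 ≤ α) (hβ : 0 ≤ β) (h : 0 < α + β) (t : ℝ) :
    HasDerivAt (fun t => log (α * exp t + β * exp (-t)))
      ((α * exp t - β * exp (-t)) / (α * exp t + β * exp (-t))) t := by
  have h1 : HasDerivAt (fun t : ℝ => α * exp t + β * exp (-t))
      (α * exp t + β * (exp (-t) * (-1))) t := by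
    exact ((Real.hasDerivAt_exp t).const_mul α).add
      ((((Real.hasDerivAt_exp (-t)).comp t (hasDerivAt_neg t))).const_mul β)
  have := h1.log (ne_of_gt (combPos hα hβ h t))
  convert this using 1
  field_simp
  ring

lemma continuous_logcomb (hα : 0 ≤ α) (hβ : 0 ≤ β) (h : 0 < α + β) :
    Continuous (fun t => log (α * exp t + β * exp (-t))) := by
  rw [continuous_iff_continuousAt]
  exact fun t => (hasDerivAt_logcomb hα hβ h t).continuousAt

lemma convexOn_affine (c d : ℝ) : ConvexOn ℝ Set.univ (fun t : ℝ => c + d * t) := by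
  refine ⟨convex_univ, ?_⟩
  intro x _ y _ a b _ _ hab
  simp only [smul_eq_mul]
  have : a * (c + d * x) + b * (c + d * y) = c + d * (a * x + b * y) := by
    linear_combination c * hab
  exact le_of_eq this.symm

lemma strictConvexOn_logcomb (hα : 0 < α) (hβ : 0 < β) :
    StrictConvexOn ℝ Set.univ (fun t => log (α * exp t + β * exp (-t))) := by
  have h : 0 < α + β := by linarith
  apply StrictMono.strictConvexOn_univ_of_deriv (continuous_logcomb hα.le hβ.le h)
  have hder : deriv (fun t => log (α * exp t + β * exp (-t))) =
      fun t => (α * exp t - β * exp (-t)) / (α * exp t + β * exp (-t)) :=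
    funext fun t => (hasDerivAt_logcomb hα.le hβ.le h t).deriv
  rw [hder]
  intro s t hst
  rw [div_lt_div_iff₀ (combPos hα.le hβ.le h s) (combPos hα.le hβ.le h t)]
  have h1 : exp s * exp (-t) < exp t * exp (-s) := by
    rw [← Real.exp_add, ← Real.exp_add]
    exact Real.exp_lt_exp.2 (by linarith)
  have h2 := exp_pos s; have h3 := exp_pos t
  have h4 := exp_pos (-s); have h5 := exp_pos (-t)
  nlinarith [mul_pos hα hβ, mul_pos (mul_pos hα hα) (mul_pos h2 h3),
    mul_pos (mul_pos hβ hβ) (mul_pos h4 h5)]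

lemma convexOn_logcomb (hα : 0 ≤ α) (hβ : 0 ≤ β) (h : 0 < α + β) :
    ConvexOn ℝ Set.univ (fun t => log (α * exp t + β * exp (-t))) := by
  rcases hα.lt_or_eq with h1 | h1
  · rcases hβ.lt_or_eq with h2 | h2
    · exact (strictConvexOn_logcomb h1 h2).convexOn
    · -- β = 0 : function is log α + t
      have : (fun t => log (α * exp t + β * exp (-t))) = fun t => log α + t := by
        funext t
        rw [← h2]
        rw [show α * exp t + 0 * exp (-t) = α * exp t by ring, Real.log_mul (ne_of_gt h1)
          (ne_of_gt (exp_pos t)), Real.log_exp]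
      have e2 : (fun t : ℝ => log α + t) = fun t : ℝ => log α + 1 * t := by funext t; ring
      rw [this, e2]
      exact convexOn_affine _ _
  · have hβ' : 0 < β := by rw [← h1] at h; simpa using h
    have : (fun t => log (α * exp t + β * exp (-t))) = fun t => log β + (-t) := by
      funext t
      rw [← h1]
      rw [show 0 * exp t + β * exp (-t) = β * exp (-t) by ring, Real.log_mul (ne_of_gt hβ')
        (ne_of_gt (exp_pos (-t))), Real.log_exp]
    have e2 : (fun t : ℝ => log β + (-t)) = fun t : ℝ => log β + (-1) * t := by funext t; ring
    rw [this, e2]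
    exact convexOn_affine _ _
end conv

variable {m : ℕ}

local notation "E" => EuclideanSpace ℝ (Fin m)
local notation "Sp" => Metric.sphere (0 : EuclideanSpace ℝ (Fin m)) 1

lemma integrable_of_continuous (μ : Measure Sp) [IsProbabilityMeasure μ]
    {f : Sp → ℝ} (hf : Continuous f) : Integrable f μ := by
  have := hf.continuousOn.integrableOn_compact (μ := μ) isCompact_univ
  rwa [integrableOn_univ] at this

lemma strictConvexOn_integral {X : Type*} [MeasurableSpace X] (μ : Measure X)
    [IsProbabilityMeasure μ] {F : ℝ → X → ℝ}
    (hconv : ∀ θ, ConvexOn ℝ Set.univ (fun t => F t θ))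
    (hstrict : ∀ᵐ θ ∂μ, StrictConvexOn ℝ Set.univ (fun t => F t θ))
    (hint : ∀ t, Integrable (F t) μ) :
    StrictConvexOn ℝ Set.univ (fun t => ∫ θ, F t θ ∂μ) := by
  refine ⟨convex_univ, ?_⟩
  intro x _ y _ hxy a b ha hb hab
  simp only [smul_eq_mul]
  set g : X → ℝ := fun θ => a * F x θ + b * F y θ - F (a * x + b * y) θ with hg
  have hg0 : ∀ θ, 0 ≤ g θ := by
    intro θ
    have := (hconv θ).2 (Set.mem_univ x) (Set.mem_univ y) ha.le hb.le hab
    simp only [smul_eq_mul] at this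
    simp only [hg]
    linarith
  have hgint : Integrable g μ :=
    (((hint x).const_mul a).add ((hint y).const_mul b)).sub (hint (a * x + b * y))
  have hgpos : ∀ᵐ θ ∂μ, 0 < g θ := by
    filter_upwards [hstrict] with θ hθ
    have := hθ.2 (Set.mem_univ x) (Set.mem_univ y) hxy ha hb hab
    simp only [smul_eq_mul] at this
    simp only [hg]
    linarith
  have hne : ∫ θ, g θ ∂μ ≠ 0 := by
    intro h0
    have := (integral_eq_zero_iff_of_nonneg hg0 hgint).mp h0
    have hae : ∀ᵐ θ ∂μ, False := by
      filter_upwards [this, hgpos] with θ h1 h2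
      rw [Pi.zero_apply] at *
      simp only [show g θ = 0 from h1] at h2
      exact lt_irrefl _ h2
    have : (Filter.NeBot (ae μ)) := ae_neBot.mpr (IsProbabilityMeasure.ne_zero μ)
    exact (hae.exists).choose_spec.elim
  have hpos : 0 < ∫ θ, g θ ∂μ := lt_of_le_of_ne (integral_nonneg hg0) (Ne.symm hne)
  have hsplit : ∫ θ, g θ ∂μ =
      a * ∫ θ, F x θ ∂μ + b * ∫ θ, F y θ ∂μ - ∫ θ, F (a * x + b * y) θ ∂μ := by
    have h2 : Integrable (fun θ => a * F x θ) μ := (hint x).const_mul a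
    have h3 : Integrable (fun θ => b * F y θ) μ := (hint y).const_mul b
    have h1 : Integrable (fun θ => a * F x θ + b * F y θ) μ := h2.add h3
    rw [hg]
    rw [integral_sub h1 (hint (a * x + b * y)), integral_add h2 h3,
      integral_const_mul, integral_const_mul]
  linarith [hsplit ▸ hpos]

lemma cap_subset_singleton (u : E) (hu : ‖u‖ = 1) :
    {θ : Sp | 1 ≤ ⟪u, (θ : E)⟫} ⊆ {(⟨u, by simp [hu]⟩ : Sp)} := by
  intro θ hθ
  have hθn : ‖(θ : E)‖ = 1 := by simpa [mem_sphere_zero_iff_norm] using θ.2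
  have hle : ⟪u, (θ : E)⟫ ≤ 1 := by
    have := real_inner_le_norm u (θ : E)
    rw [hu, hθn] at this; simpa using this
  have heq : ⟪u, (θ : E)⟫ = 1 := le_antisymm hle hθ
  have h0 : ‖u - (θ : E)‖ ^ 2 = 0 := by
    rw [norm_sub_sq_real, hu, hθn, heq]; ring
  have huθ : u = (θ : E) :=
    sub_eq_zero.mp (norm_eq_zero.mp (pow_eq_zero_iff (two_ne_zero).elim (n := 2) |>.mp h0))
  exact Set.mem_singleton_iff.mpr (Subtype.ext huθ.symm)

lemma exists_eps (μ : Measure Sp) [IsProbabilityMeasure μ] [NullSingletonClass μ]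
    (u : E) (hu : ‖u‖ = 1) :
    ∃ ε : ℝ, 0 < ε ∧ μ {θ : Sp | 1 - 2 * ε ≤ ⟪u, (θ : E)⟫} < 1/4 := by
  have hcont : Continuous (fun θ : Sp => ⟪u, (θ : E)⟫) :=
    continuous_const.inner continuous_subtype_val
  set B : ℕ → Set Sp := fun n => {θ : Sp | 1 - 1/(n+1) ≤ ⟪u, (θ : E)⟫} with hB
  have hclosed : ∀ n, IsClosed (B n) := fun n => isClosed_Ici.preimage hcont
  have hanti : Antitone B := by
    intro n n' hnn' θ hθ
    have h1 : (1:ℝ)/(n'+1) ≤ 1/(n+1) := by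
      apply one_div_le_one_div_of_le
      · positivity
      · have : (n:ℝ) ≤ n' := Nat.cast_le.mpr hnn'
        linarith
    simp only [hB, Set.mem_setOf_eq] at hθ ⊢
    linarith
  have hiInter : ⋂ n, B n = {θ : Sp | 1 ≤ ⟪u, (θ : E)⟫} := by
    ext θ
    simp only [Set.mem_iInter, hB, Set.mem_setOf_eq]
    constructor
    · intro h
      by_contra h'
      push_neg at h'
      have h1 : (0:ℝ) < 1 - ⟪u, (θ : E)⟫ := by linarith
      obtain ⟨n, hn⟩ := exists_nat_gt (1/(1 - ⟪u, (θ : E)⟫))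
      have hn1 : 1/(1 - ⟪u, (θ : E)⟫) < (n:ℝ)+1 := by linarith
      have h2 : (1:ℝ) < ((n:ℝ)+1) * (1 - ⟪u, (θ : E)⟫) := by
        have := (div_lt_iff₀ h1).mp hn1
        nlinarith
      have h3 := h n
      have h4 : (0:ℝ) < (n:ℝ)+1 := by positivity
      rw [sub_le_iff_le_add] at h3
      have : (1:ℝ)/((n:ℝ)+1) < 1 - ⟪u, (θ : E)⟫ := by
        rw [div_lt_iff₀ h4]; nlinarith
      linarith
    · intro h n
      have : (0:ℝ) < 1/((n:ℝ)+1) := by positivity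
      linarith
  have hzero : μ (⋂ n, B n) = 0 := by
    rw [hiInter]
    refine le_antisymm ?_ zero_le
    calc μ {θ : Sp | 1 ≤ ⟪u, (θ : E)⟫} ≤ μ {(⟨u, by simp [hu]⟩ : Sp)} :=
          measure_mono (cap_subset_singleton u hu)
      _ = 0 := measure_singleton _
  have htend : Filter.Tendsto (μ ∘ B) Filter.atTop (nhds 0) := by
    have := tendsto_measure_iInter_atTop (μ := μ)
      (fun n => ((hclosed n).measurableSet).nullMeasurableSet) hanti
      ⟨0, measure_ne_top μ _⟩
    rwa [hzero] at this
  have hev := htend.eventually_lt_const (show (0:ℝ≥0∞) < 1/4 by norm_num)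
  obtain ⟨n, hn⟩ := hev.exists
  refine ⟨1/(2*((n:ℝ)+1)), by positivity, ?_⟩
  have : 2 * (1/(2*((n:ℝ)+1))) = 1/((n:ℝ)+1) := by field_simp
  rw [this]
  exact hn

lemma uniform_cap (hm : 0 < m) (μ : Measure Sp) [IsProbabilityMeasure μ] [NullSingletonClass μ] :
    ∃ ε : ℝ, 0 < ε ∧ ∀ u : E, ‖u‖ = 1 → μ {θ : Sp | 1 - ε ≤ ⟪u, (θ : E)⟫} ≤ 1/4 := by
  have H : ∀ u : E, ∃ ε, 0 < ε ∧ (‖u‖ = 1 → μ {θ : Sp | 1 - 2*ε ≤ ⟪u, (θ : E)⟫} < 1/4) := by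
    intro u
    by_cases hu : ‖u‖ = 1
    · obtain ⟨ε, hε, h⟩ := exists_eps μ u hu; exact ⟨ε, hε, fun _ => h⟩
    · exact ⟨1, one_pos, fun h => absurd h hu⟩
  choose ε' hε'pos hε'cap using H
  have hcover : (Metric.sphere (0:E) 1) ⊆ ⋃ u ∈ Metric.sphere (0:E) 1, Metric.ball u (ε' u) :=
    fun u hu => Set.mem_biUnion hu (Metric.mem_ball_self (hε'pos u))
  obtain ⟨t, hts, htfin, htcover⟩ := (isCompact_sphere (0:E) 1).elim_finite_subcover_image
    (fun u _ => Metric.isOpen_ball) hcover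
  -- the sphere is nonempty
  have hu₀ : (EuclideanSpace.single (⟨0, hm⟩ : Fin m) (1:ℝ)) ∈ Metric.sphere (0:E) 1 := by
    simp [mem_sphere_zero_iff_norm, EuclideanSpace.norm_single]
  have ht0 : htfin.toFinset.Nonempty := by
    obtain ⟨i, hi⟩ := Set.mem_iUnion.mp (htcover hu₀)
    obtain ⟨hit, -⟩ := Set.mem_iUnion.mp hi
    exact ⟨i, htfin.mem_toFinset.mpr hit⟩
  set F := htfin.toFinset
  refine ⟨F.inf' ht0 ε', ?_, ?_⟩
  · rw [Finset.lt_inf'_iff]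
    exact fun i _ => hε'pos i
  · intro u hu
    have husph : u ∈ Metric.sphere (0:E) 1 := by simpa [mem_sphere_zero_iff_norm] using hu
    obtain ⟨i, hi⟩ := Set.mem_iUnion.mp (htcover husph)
    obtain ⟨hit, hball⟩ := Set.mem_iUnion.mp hi
    have hinorm : ‖i‖ = 1 := by
      have := hts hit; simpa [mem_sphere_zero_iff_norm] using this
    have hdist : ‖u - i‖ < ε' i := by
      rw [← dist_eq_norm]; exact Metric.mem_ball.mp hball
    have hεle : F.inf' ht0 ε' ≤ ε' i := Finset.inf'_le _ (htfin.mem_toFinset.mpr hit)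
    have hsub : {θ : Sp | 1 - F.inf' ht0 ε' ≤ ⟪u, (θ : E)⟫} ⊆
        {θ : Sp | 1 - 2 * ε' i ≤ ⟪i, (θ : E)⟫} := by
      intro θ hθ
      simp only [Set.mem_setOf_eq] at *
      have hθn : ‖(θ : E)‖ = 1 := by simpa [mem_sphere_zero_iff_norm] using θ.2
      have hcs : ⟪u - i, (θ : E)⟫ ≤ ‖u - i‖ := by
        have := real_inner_le_norm (u - i) (θ : E)
        rw [hθn] at this; simpa using this
      have : ⟪i, (θ : E)⟫ = ⟪u, (θ : E)⟫ - ⟪u - i, (θ : E)⟫ := by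
        rw [inner_sub_left]; ring
      rw [this]
      linarith
    exact le_of_lt (lt_of_le_of_lt (measure_mono hsub) (hε'cap i hinorm))
section hypgeom
variable {x v : Fin (m + 1) → ℝ}

lemma mink_eq_inner (x y : Fin (m + 1) → ℝ) :
    mink m x y = ⟪spatial m x, spatial m y⟫ - x 0 * y 0 := by
  rw [inner_spatial]; rfl

lemma hyp_sq (hx : x ∈ Hyp m) : (x 0) ^ 2 = 1 + ‖spatial m x‖ ^ 2 := by
  have h := hx.1
  rw [mink_self] at h
  linarith

lemma hyp_one_le (hx : x ∈ Hyp m) : 1 ≤ x 0 := by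
  have h := hyp_sq hx
  have h2 := hx.2
  nlinarith [sq_nonneg ‖spatial m x‖]

lemma hyp_norm_lt (hx : x ∈ Hyp m) : ‖spatial m x‖ < x 0 := by
  have h := hyp_sq hx
  have h2 := hx.2
  nlinarith [norm_nonneg (spatial m x)]

lemma hyp_gap (hx : x ∈ Hyp m) : 1 / (2 * x 0) ≤ x 0 - ‖spatial m x‖ := by
  have h := hyp_sq hx
  have h2 := hx.2
  have h3 := norm_nonneg (spatial m x)
  rw [div_le_iff₀ (by linarith)]
  nlinarith

lemma neg_mink_null_lower (hx : x ∈ Hyp m) {θ : EuclideanSpace ℝ (Fin m)} (hθ : ‖θ‖ = 1) :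
    x 0 - ‖spatial m x‖ ≤ -(mink m x (nullVec m θ)) := by
  rw [mink_nullVec]
  have := real_inner_le_norm (spatial m x) θ
  rw [hθ, mul_one] at this
  linarith

lemma neg_mink_null_upper (hx : x ∈ Hyp m) {θ : EuclideanSpace ℝ (Fin m)} (hθ : ‖θ‖ = 1) :
    -(mink m x (nullVec m θ)) ≤ x 0 + ‖spatial m x‖ := by
  rw [mink_nullVec]
  have := abs_real_inner_le_norm (spatial m x) θ
  rw [hθ, mul_one] at this
  have := neg_abs_le (⟪spatial m x, θ⟫)
  linarith [abs_real_inner_le_norm (spatial m x) θ]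

lemma neg_mink_null_pos (hx : x ∈ Hyp m) {θ : EuclideanSpace ℝ (Fin m)} (hθ : ‖θ‖ = 1) :
    0 < -(mink m x (nullVec m θ)) := by
  have h1 := neg_mink_null_lower hx hθ
  have h2 := hyp_norm_lt hx
  linarith

lemma v0_sq_le (hx : x ∈ Hyp m) (hv1 : mink m x v = 0) (hv2 : mink m v v = 1) :
    (v 0) ^ 2 ≤ (x 0) ^ 2 - 1 := by
  have hxv := mink_eq_inner x v
  rw [hv1] at hxv
  have hvv : ‖spatial m v‖ ^ 2 = 1 + (v 0) ^ 2 := by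
    have h := hv2
    rw [mink_self] at h
    linarith
  have hxx := hyp_sq hx
  have hcs := real_inner_mul_inner_self_le (spatial m x) (spatial m v)
  rw [real_inner_self_eq_norm_sq, real_inner_self_eq_norm_sq] at hcs
  have hip : ⟪spatial m x, spatial m v⟫ = x 0 * v 0 := by linarith
  rw [hip] at hcs
  nlinarith

lemma mink_add_smul_right (s t : ℝ) (x v y : Fin (m + 1) → ℝ) :
    mink m y (s • x + t • v) = s * mink m y x + t * mink m y v := by
  rw [mink_comm, mink_add_smul, mink_comm x y, mink_comm v y]

lemma geod_x0_pos (hx : x ∈ Hyp m) (hv1 : mink m x v = 0) (hv2 : mink m v v = 1) (t : ℝ) :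
    0 < Real.cosh t * x 0 + Real.sinh t * v 0 := by
  have hv0 := v0_sq_le hx hv1 hv2
  have h1 := Real.cosh_sq_sub_sinh_sq t
  have h2 := Real.cosh_pos t
  have h3 := hyp_one_le hx
  nlinarith [sq_nonneg (Real.cosh t * x 0 + Real.sinh t * v 0),
    sq_nonneg (Real.sinh t), mul_pos h2 (lt_of_lt_of_le one_pos h3)]

lemma geod_mem_hyp (hx : x ∈ Hyp m) (hv1 : mink m x v = 0) (hv2 : mink m v v = 1) (t : ℝ) :
    (Real.cosh t • x + Real.sinh t • v) ∈ Hyp m := by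
  constructor
  · have e1 : mink m (Real.cosh t • x + Real.sinh t • v) (Real.cosh t • x + Real.sinh t • v)
        = Real.cosh t * (Real.cosh t * mink m x x + Real.sinh t * mink m x v)
          + Real.sinh t * (Real.cosh t * mink m v x + Real.sinh t * mink m v v) := by
      rw [mink_add_smul, mink_add_smul_right, mink_add_smul_right]
    rw [e1, hx.1, hv1, hv2, mink_comm v x, hv1]
    have := Real.cosh_sq_sub_sinh_sq t
    nlinarith
  · have := geod_x0_pos hx hv1 hv2 t
    simpa using this

end hypgeom

section bus
variable {x v : Fin (m + 1) → ℝ}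

lemma sp_norm_one (θ : Sp) : ‖(θ : E)‖ = 1 := by
  simpa [mem_sphere_zero_iff_norm] using θ.2

lemma mink_geod_null (x v : Fin (m + 1) → ℝ) (θ : EuclideanSpace ℝ (Fin m)) (t : ℝ) :
    -(mink m (Real.cosh t • x + Real.sinh t • v) (nullVec m θ)) =
      ((-(mink m x (nullVec m θ)) + -(mink m v (nullVec m θ))) / 2) * Real.exp t
      + ((-(mink m x (nullVec m θ)) - -(mink m v (nullVec m θ))) / 2) * Real.exp (-t) := by
  rw [mink_add_smul, Real.cosh_eq, Real.sinh_eq]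
  ring

lemma null_norm_eq {w : Fin (m + 1) → ℝ} (hw : mink m w w = 0) (hw0 : 0 < w 0) :
    ‖spatial m w‖ = w 0 := by
  have h := mink_self w
  rw [hw] at h
  have h1 : ‖spatial m w‖ ^ 2 = (w 0) ^ 2 := by linarith
  rw [← Real.sqrt_sq (norm_nonneg (spatial m w)), h1, Real.sqrt_sq hw0.le]

lemma null_nonneg {w : Fin (m + 1) → ℝ} (hw : mink m w w = 0) (hw0 : 0 < w 0)
    {θ : EuclideanSpace ℝ (Fin m)} (hθ : ‖θ‖ = 1) :
    0 ≤ -(mink m w (nullVec m θ)) := by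
  rw [mink_nullVec]
  have h1 := real_inner_le_norm (spatial m w) θ
  rw [hθ, mul_one, null_norm_eq hw hw0] at h1
  linarith

lemma null_eq_imp {w : Fin (m + 1) → ℝ} (hw : mink m w w = 0) (hw0 : 0 < w 0)
    {θ : EuclideanSpace ℝ (Fin m)} (hθ : ‖θ‖ = 1)
    (heq : -(mink m w (nullVec m θ)) = 0) : θ = (w 0)⁻¹ • spatial m w := by
  rw [mink_nullVec] at heq
  have hip : ⟪spatial m w, θ⟫ = w 0 := by linarith
  have hnw := null_norm_eq hw hw0
  have h0 : ‖spatial m w - (w 0) • θ‖ ^ 2 = 0 := by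
    rw [norm_sub_sq_real, real_inner_smul_right, norm_smul, hip, hnw]
    rw [Real.norm_eq_abs, abs_of_pos hw0, hθ]
    ring
  have h1 : spatial m w = (w 0) • θ :=
    sub_eq_zero.mp (norm_eq_zero.mp (pow_eq_zero_iff (two_ne_zero).elim (n := 2) |>.mp h0))
  rw [h1, smul_smul, inv_mul_cancel₀ (ne_of_gt hw0), one_smul]

lemma null_plus (hx : x ∈ Hyp m) (hv1 : mink m x v = 0) (hv2 : mink m v v = 1) :
    mink m (x + v) (x + v) = 0 ∧ 0 < (x + v) 0 := by
  have hv0 := v0_sq_le hx hv1 hv2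
  have h3 := hyp_one_le hx
  constructor
  · have e : x + v = (1:ℝ) • x + (1:ℝ) • v := by simp
    rw [e, mink_add_smul, mink_add_smul_right, mink_add_smul_right, hx.1, hv1, hv2,
      mink_comm v x, hv1]
    ring
  · have : (x + v) 0 = x 0 + v 0 := rfl
    rw [this]
    nlinarith

lemma null_minus (hx : x ∈ Hyp m) (hv1 : mink m x v = 0) (hv2 : mink m v v = 1) :
    mink m (x - v) (x - v) = 0 ∧ 0 < (x - v) 0 := by
  have hv0 := v0_sq_le hx hv1 hv2
  have h3 := hyp_one_le hx
  constructor
  · have e : x - v = (1:ℝ) • x + (-1:ℝ) • v := by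
      funext i; simp; ring
    rw [e, mink_add_smul, mink_add_smul_right, mink_add_smul_right, hx.1, hv1, hv2,
      mink_comm v x, hv1]
    ring
  · have : (x - v) 0 = x 0 - v 0 := rfl
    rw [this]
    nlinarith

lemma mink_add_null (x v : Fin (m + 1) → ℝ) (θ : EuclideanSpace ℝ (Fin m)) :
    mink m (x + v) (nullVec m θ) = mink m x (nullVec m θ) + mink m v (nullVec m θ) := by
  have e : x + v = (1:ℝ) • x + (1:ℝ) • v := by simp
  rw [e, mink_add_smul]
  ring

lemma mink_sub_null (x v : Fin (m + 1) → ℝ) (θ : EuclideanSpace ℝ (Fin m)) :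
    mink m (x - v) (nullVec m θ) = mink m x (nullVec m θ) - mink m v (nullVec m θ) := by
  have e : x - v = (1:ℝ) • x + (-1:ℝ) • v := by funext i; simp; ring
  rw [e, mink_add_smul]
  ring

lemma continuous_bus {y : Fin (m + 1) → ℝ} (hy : y ∈ Hyp m) :
    Continuous (fun θ : Sp => Bus m y (θ : E)) := by
  have hcont : Continuous fun θ : Sp => -(mink m y (nullVec m (θ : E))) := by
    have e : (fun θ : Sp => -(mink m y (nullVec m (θ : E))))
        = fun θ : Sp => y 0 - ⟪spatial m y, (θ : E)⟫ := by
      funext θ; rw [mink_nullVec]; ring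
    rw [e]
    exact continuous_const.sub (continuous_const.inner continuous_subtype_val)
  rw [continuous_iff_continuousAt]
  intro θ
  exact (hcont.continuousAt).log (ne_of_gt (neg_mink_null_pos hy (sp_norm_one θ)))

end bus

section part1
variable {x v : Fin (m + 1) → ℝ}

theorem part1 (μ : Measure Sp) [IsProbabilityMeasure μ] [NullSingletonClass μ]
    (hx : x ∈ Hyp m) (hv1 : mink m x v = 0) (hv2 : mink m v v = 1) :
    StrictConvexOn ℝ Set.univ
      (fun t : ℝ => ∫ θ, Bus m (Real.cosh t • x + Real.sinh t • v) ↑θ ∂μ) := by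
  obtain ⟨hwp, hwp0⟩ := null_plus hx hv1 hv2
  obtain ⟨hwq, hwq0⟩ := null_minus hx hv1 hv2
  set p : E := ((x + v) 0)⁻¹ • spatial m (x + v) with hp
  set q : E := ((x - v) 0)⁻¹ • spatial m (x - v) with hq
  set Af : Sp → ℝ :=
    fun θ => (-(mink m x (nullVec m ↑θ)) + -(mink m v (nullVec m ↑θ))) / 2 with hAf
  set Bf : Sp → ℝ :=
    fun θ => (-(mink m x (nullVec m ↑θ)) - -(mink m v (nullVec m ↑θ))) / 2 with hBf
  have hfun : ∀ θ : Sp, (fun t : ℝ => Bus m (Real.cosh t • x + Real.sinh t • v) (θ : E)) =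
      fun t : ℝ => Real.log (Af θ * Real.exp t + Bf θ * Real.exp (-t)) := by
    intro θ
    funext t
    simp only [Bus, hAf, hBf]
    rw [← mink_geod_null]
  have hA2 : ∀ θ : Sp, 2 * Af θ = -(mink m (x + v) (nullVec m ↑θ)) := by
    intro θ; rw [mink_add_null]; simp only [hAf]; ring
  have hB2 : ∀ θ : Sp, 2 * Bf θ = -(mink m (x - v) (nullVec m ↑θ)) := by
    intro θ; rw [mink_sub_null]; simp only [hBf]; ring
  have hA0 : ∀ θ : Sp, 0 ≤ Af θ := by
    intro θ
    have := null_nonneg hwp hwp0 (sp_norm_one θ)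
    have h2 := hA2 θ
    linarith
  have hB0 : ∀ θ : Sp, 0 ≤ Bf θ := by
    intro θ
    have := null_nonneg hwq hwq0 (sp_norm_one θ)
    have h2 := hB2 θ
    linarith
  have hABpos : ∀ θ : Sp, 0 < Af θ + Bf θ := by
    intro θ
    have := neg_mink_null_pos hx (sp_norm_one θ)
    simp only [hAf, hBf]
    linarith
  apply strictConvexOn_integral μ
    (F := fun (t : ℝ) (θ : Sp) => Bus m (Real.cosh t • x + Real.sinh t • v) (θ : E))
  · intro θ
    rw [hfun θ]
    exact convexOn_logcomb (hA0 θ) (hB0 θ) (hABpos θ)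
  · have hbadp : μ {θ : Sp | (θ : E) = p} = 0 :=
      Set.Subsingleton.measure_zero (fun θ1 h1 θ2 h2 => Subtype.ext (h1.trans h2.symm)) μ
    have hbadq : μ {θ : Sp | (θ : E) = q} = 0 :=
      Set.Subsingleton.measure_zero (fun θ1 h1 θ2 h2 => Subtype.ext (h1.trans h2.symm)) μ
    have hbad : μ ({θ : Sp | (θ : E) = p} ∪ {θ : Sp | (θ : E) = q}) = 0 :=
      le_antisymm (le_trans (measure_union_le _ _) (by rw [hbadp, hbadq]; simp)) zero_le
    have hae : ∀ᵐ θ ∂μ, θ ∉ ({θ : Sp | (θ : E) = p} ∪ {θ : Sp | (θ : E) = q}) :=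
      measure_eq_zero_iff_ae_notMem.mp hbad
    filter_upwards [hae] with θ hθ
    rw [hfun θ]
    have hApos : 0 < Af θ := by
      rcases (hA0 θ).lt_or_eq with h | h
      · exact h
      · exfalso
        apply hθ
        left
        have h0 : -(mink m (x + v) (nullVec m ↑θ)) = 0 := by
          have := hA2 θ; rw [← h] at this; linarith
        exact Set.mem_setOf_eq ▸ (null_eq_imp hwp hwp0 (sp_norm_one θ) h0)
    have hBpos : 0 < Bf θ := by
      rcases (hB0 θ).lt_or_eq with h | h
      · exact h
      · exfalso
        apply hθ
        right
        have h0 : -(mink m (x - v) (nullVec m ↑θ)) = 0 := by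
          have := hB2 θ; rw [← h] at this; linarith
        exact Set.mem_setOf_eq ▸ (null_eq_imp hwq hwq0 (sp_norm_one θ) h0)
    exact strictConvexOn_logcomb hApos hBpos
  · intro t
    exact integrable_of_continuous μ (continuous_bus (geod_mem_hyp hx hv1 hv2 t))

end part1

section part2

set_option maxHeartbeats 1000000 in
theorem part2 (hm : 0 < m) (μ : Measure Sp) [IsProbabilityMeasure μ] [NullSingletonClass μ] (C : ℝ) :
    ∃ R : ℝ, ∀ x ∈ Hyp m, R < x 0 → C < ∫ θ, Bus m x ↑θ ∂μ := by
  obtain ⟨ε, hεpos, hcap⟩ := uniform_cap hm μ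
  set ε0 : ℝ := min ε 1 with hε0def
  have hε0pos : 0 < ε0 := lt_min hεpos one_pos
  have hε0le : ε0 ≤ 1 := min_le_right _ _
  have hcap0 : ∀ u : E, ‖u‖ = 1 → μ {θ : Sp | 1 - ε0 ≤ ⟪u, (θ : E)⟫} ≤ 1/4 := by
    intro u hu
    refine le_trans (measure_mono ?_) (hcap u hu)
    intro θ hθ
    simp only [Set.mem_setOf_eq] at *
    have : ε0 ≤ ε := min_le_left _ _
    linarith
  refine ⟨max (Real.exp (2*C - (3/2) * Real.log ε0 + Real.log 2)) (max (1/ε0) 1), ?_⟩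
  intro x hx hR
  set h : ℝ := x 0 with hh
  set r : ℝ := ‖spatial m x‖ with hr
  have hh1 : 1 < h := lt_of_le_of_lt (le_trans (le_max_right _ _) (le_max_right _ _)) hR
  have hhε : 1/ε0 < h := lt_of_le_of_lt (le_trans (le_max_left _ _) (le_max_right _ _)) hR
  have hhC : Real.exp (2*C - (3/2) * Real.log ε0 + Real.log 2) < h :=
    lt_of_le_of_lt (le_max_left _ _) hR
  have hr2 : h ^ 2 = 1 + r ^ 2 := hyp_sq hx
  have hrll : r < h := hyp_norm_lt hx
  have hrpos : 0 < r := by nlinarith [norm_nonneg (spatial m x)]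
  set u : E := r⁻¹ • spatial m x with hu
  have hunorm : ‖u‖ = 1 := by
    rw [hu, norm_smul, Real.norm_eq_abs, abs_of_pos (inv_pos.mpr hrpos), ← hr]
    field_simp
  have hspr : spatial m x = r • u := by
    rw [hu, smul_smul, mul_inv_cancel₀ (ne_of_gt hrpos), one_smul]
  set A : Set Sp := {θ : Sp | 1 - ε0 ≤ ⟪u, (θ : E)⟫} with hA
  have hAclosed : IsClosed A := by
    have e : A = (fun θ : Sp => ⟪u, (θ : E)⟫) ⁻¹' Set.Ici (1 - ε0) := rfl
    rw [e]
    exact isClosed_Ici.preimage (continuous_const.inner continuous_subtype_val)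
  have hAmeas : MeasurableSet A := hAclosed.measurableSet
  have hμA : μ A ≤ 1/4 := hcap0 u hunorm
  -- pointwise description of Bus
  have hBus : ∀ θ : Sp, Bus m x (θ : E) = Real.log (h - r * ⟪u, (θ : E)⟫) := by
    intro θ
    simp only [Bus]
    rw [mink_nullVec, hspr, real_inner_smul_left]
    ring_nf
    rfl
  have hgap : 1/(2*h) ≤ h - r := hyp_gap hx
  have hlow1 : ∀ θ : Sp, -Real.log (2*h) ≤ Bus m x (θ : E) := by
    intro θ
    rw [hBus θ, ← Real.log_inv, ← one_div]
    apply Real.log_le_log (by positivity)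
    have hcs : ⟪u, (θ : E)⟫ ≤ 1 := by
      have := real_inner_le_norm u (θ : E)
      rw [hunorm, sp_norm_one θ] at this
      simpa using this
    nlinarith
  have hlow2 : ∀ θ : Sp, θ ∉ A → Real.log (h * ε0) ≤ Bus m x (θ : E) := by
    intro θ hθ
    rw [hBus θ]
    apply Real.log_le_log (by positivity)
    simp only [hA, Set.mem_setOf_eq, not_le] at hθ
    nlinarith
  set ψ : Sp → ℝ :=
    fun θ => Set.indicator A (fun _ => (-Real.log (2*h)) - Real.log (h * ε0)) θ
      + Real.log (h * ε0) with hψ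
  have hψle : ∀ θ, ψ θ ≤ Bus m x (θ : E) := by
    intro θ
    by_cases hθ : θ ∈ A
    · simp only [hψ, Set.indicator_of_mem hθ]
      have := hlow1 θ
      linarith
    · simp only [hψ, Set.indicator_of_notMem hθ]
      have := hlow2 θ hθ
      linarith
  have hψint : Integrable ψ μ :=
    ((integrable_const _).indicator hAmeas).add (integrable_const _)
  have hbusint : Integrable (fun θ : Sp => Bus m x (θ : E)) μ :=
    integrable_of_continuous μ (continuous_bus hx)
  have hmono : ∫ θ, ψ θ ∂μ ≤ ∫ θ, Bus m x ↑θ ∂μ := integral_mono hψint hbusint hψle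
  have hψval : ∫ θ, ψ θ ∂μ =
      ((-Real.log (2*h)) - Real.log (h * ε0)) * (μ A).toReal + Real.log (h * ε0) := by
    rw [hψ, integral_add ((integrable_const _).indicator hAmeas) (integrable_const _),
      integral_indicator_const _ hAmeas, integral_const]
    simp [measure_univ, smul_eq_mul, mul_comm]
    exact Or.inl rfl
  set τ : ℝ := (μ A).toReal with hτ
  have hτ0 : 0 ≤ τ := ENNReal.toReal_nonneg
  have hτ14 : τ ≤ 1/4 := by
    have := ENNReal.toReal_mono (by norm_num) hμA
    simpa using this
  have hL1 : 0 ≤ Real.log (h * ε0) := by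
    apply Real.log_nonneg
    rw [div_lt_iff₀ hε0pos] at hhε
    nlinarith
  have hL2 : 0 ≤ Real.log (2*h) := Real.log_nonneg (by linarith)
  have hlogh : 2*C - (3/2) * Real.log ε0 + Real.log 2 < Real.log h :=
    (Real.lt_log_iff_exp_lt (by linarith)).mpr hhC
  have hexp1 : Real.log (h * ε0) = Real.log h + Real.log ε0 :=
    Real.log_mul (by linarith) (ne_of_gt hε0pos)
  have hexp2 : Real.log (2*h) = Real.log 2 + Real.log h :=
    Real.log_mul (by norm_num) (by linarith)
  calc C < (3/4) * Real.log (h * ε0) - (1/4) * Real.log (2*h) := by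
        rw [hexp1, hexp2]; nlinarith [Real.log_pos (by norm_num : (1:ℝ) < 2)]
    _ ≤ ((-Real.log (2*h)) - Real.log (h * ε0)) * τ + Real.log (h * ε0) := by nlinarith
    _ = ∫ θ, ψ θ ∂μ := by rw [hψval]
    _ ≤ ∫ θ, Bus m x ↑θ ∂μ := hmono

end part2

section cont

lemma continuous_spatial : Continuous (fun x : Fin (m + 1) → ℝ => spatial m x) := by
  have : Continuous fun x : Fin (m + 1) → ℝ =>
      (EuclideanSpace.equiv (Fin m) ℝ).symm (fun i => x i.succ) :=
    (EuclideanSpace.equiv (Fin m) ℝ).symm.continuous.comp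
      (continuous_pi fun i => continuous_apply i.succ)
  exact this

lemma continuous_negmink (θ : EuclideanSpace ℝ (Fin m)) :
    Continuous (fun x : Fin (m + 1) → ℝ => -(mink m x (nullVec m θ))) := by
  have e : (fun x : Fin (m + 1) → ℝ => -(mink m x (nullVec m θ)))
      = fun x => x 0 - ⟪spatial m x, θ⟫ := by
    funext x; rw [mink_nullVec]; ring
  rw [e]
  exact (continuous_apply 0).sub (continuous_spatial.inner continuous_const)

lemma continuousAt_avg (μ : Measure Sp) [IsProbabilityMeasure μ]
    {x₀ : Fin (m + 1) → ℝ} (hx₀ : x₀ ∈ Hyp m) :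
    ContinuousAt (fun x : Fin (m + 1) → ℝ => ∫ θ, Bus m x ↑θ ∂μ) x₀ := by
  have hg : Continuous (fun x : Fin (m + 1) → ℝ => x 0 - ‖spatial m x‖) :=
    (continuous_apply 0).sub continuous_spatial.norm
  have hgM : Continuous (fun x : Fin (m + 1) → ℝ => x 0 + ‖spatial m x‖) :=
    (continuous_apply 0).add continuous_spatial.norm
  set c : ℝ := (x₀ 0 - ‖spatial m x₀‖) / 2 with hc
  set M : ℝ := x₀ 0 + ‖spatial m x₀‖ + 1 with hM
  have hcpos : 0 < c := by
    have h1 := hyp_norm_lt hx₀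
    rw [hc]; linarith
  have hcM : c < M := by
    have h1 := hyp_norm_lt hx₀
    have h2 := norm_nonneg (spatial m x₀)
    have h3 := hx₀.2
    rw [hc, hM]; linarith
  set U : Set (Fin (m + 1) → ℝ) :=
    (fun x => x 0 - ‖spatial m x‖) ⁻¹' Set.Ioi c ∩
      (fun x => x 0 + ‖spatial m x‖) ⁻¹' Set.Iio M with hU
  have hUopen : IsOpen U := (isOpen_Ioi.preimage hg).inter (isOpen_Iio.preimage hgM)
  have hx₀U : x₀ ∈ U := by
    constructor
    · simp only [Set.mem_preimage, Set.mem_Ioi]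
      rw [hc]; linarith [hcpos]
    · simp only [Set.mem_preimage, Set.mem_Iio]
      rw [hM]; linarith
  have hUnhds : U ∈ nhds x₀ := hUopen.mem_nhds hx₀U
  -- bounds on the interval (c, M)
  have key : ∀ x ∈ U, ∀ θ : Sp, c < -(mink m x (nullVec m (θ : E)))
      ∧ -(mink m x (nullVec m (θ : E))) < M := by
    intro x hx θ
    have h1 : c < x 0 - ‖spatial m x‖ := hx.1
    have h2 : x 0 + ‖spatial m x‖ < M := hx.2
    have hcs := abs_real_inner_le_norm (spatial m x) (θ : E)
    rw [sp_norm_one θ, mul_one] at hcs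
    rw [mink_nullVec]
    constructor
    · have := le_abs_self (⟪spatial m x, (θ : E)⟫); linarith
    · have := neg_abs_le (⟪spatial m x, (θ : E)⟫); linarith
  apply continuousAt_of_dominated (bound := fun _ : Sp => max |Real.log c| |Real.log M|)
  · apply Filter.Eventually.of_forall
    intro x
    have hcont : Continuous fun θ : Sp => -(mink m x (nullVec m (θ : E))) := by
      have e : (fun θ : Sp => -(mink m x (nullVec m (θ : E))))
          = fun θ : Sp => x 0 - ⟪spatial m x, (θ : E)⟫ := by
        funext θ; rw [mink_nullVec]; ring
      rw [e]
      exact continuous_const.sub (continuous_const.inner continuous_subtype_val)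
    have hmeas : Measurable fun θ : Sp => Bus m x (θ : E) :=
      Real.measurable_log.comp hcont.measurable
    exact hmeas.aestronglyMeasurable
  · filter_upwards [hUnhds] with x hxU
    apply Filter.Eventually.of_forall
    intro θ
    obtain ⟨hl, hu⟩ := key x hxU θ
    have hvalpos : 0 < -(mink m x (nullVec m (θ : E))) := lt_trans hcpos hl
    rw [Real.norm_eq_abs]
    rw [abs_le]
    constructor
    · have h1 : Real.log c ≤ Real.log (-(mink m x (nullVec m (θ : E)))) :=
        Real.log_le_log hcpos hl.le
      have h2 : -|Real.log c| ≤ Real.log c := neg_abs_le _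
      have : -max |Real.log c| |Real.log M| ≤ -|Real.log c| := by
        simp only [neg_le_neg_iff]
        exact le_max_left _ _
      simp only [Bus]
      linarith
    · have h1 : Real.log (-(mink m x (nullVec m (θ : E)))) ≤ Real.log M :=
        Real.log_le_log hvalpos hu.le
      have h2 : Real.log M ≤ |Real.log M| := le_abs_self _
      simp only [Bus]
      exact le_trans h1 (le_trans h2 (le_max_right _ _))
  · exact integrable_const _
  · apply Filter.Eventually.of_forall
    intro θ
    have hpos := neg_mink_null_pos hx₀ (sp_norm_one θ)
    exact ((continuous_negmink _).continuousAt).log (ne_of_gt hpos)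

end cont

section part3
variable {z z' : Fin (m + 1) → ℝ}

lemma mink_smul (c : ℝ) (x y : Fin (m + 1) → ℝ) :
    mink m (c • x) y = c * mink m x y := by
  have e : c • x = c • x + (0:ℝ) • x := by simp
  rw [e, mink_add_smul]
  ring

lemma hyp_ext (hz : z ∈ Hyp m) (hz' : z' ∈ Hyp m)
    (hsp : spatial m z = spatial m z') : z = z' := by
  have hzsq := hyp_sq hz
  have hz'sq := hyp_sq hz'
  have hn : ‖spatial m z‖ = ‖spatial m z'‖ := by rw [hsp]
  have hsqeq : (z 0) ^ 2 = (z' 0) ^ 2 := by rw [hzsq, hz'sq, hn]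
  have hfac : (z 0 - z' 0) * (z 0 + z' 0) = 0 := by linear_combination hsqeq
  have h1 : z 0 = z' 0 := by
    rcases mul_eq_zero.mp hfac with h | h
    · linarith
    · linarith [hz.2, hz'.2]
  funext i
  refine Fin.cases ?_ ?_ i
  · exact h1
  · intro j
    exact congrArg (fun p : EuclideanSpace ℝ (Fin m) => p j) hsp

lemma mink_lt_neg_one (hz : z ∈ Hyp m) (hz' : z' ∈ Hyp m) (hne : z ≠ z') :
    mink m z z' < -1 := by
  by_cases hsp : spatial m z = spatial m z'
  · exact absurd (hyp_ext hz hz' hsp) hne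
  · have hcs := real_inner_mul_inner_self_le (spatial m z) (spatial m z')
    rw [real_inner_self_eq_norm_sq, real_inner_self_eq_norm_sq] at hcs
    have hzsq := hyp_sq hz
    have hz'sq := hyp_sq hz'
    have hsubpos : 0 < ‖spatial m z - spatial m z'‖ ^ 2 := by
      have := norm_pos_iff.mpr (sub_ne_zero.mpr hsp)
      positivity
    have hexp : ‖spatial m z - spatial m z'‖ ^ 2 =
        ‖spatial m z‖ ^ 2 - 2 * ⟪spatial m z, spatial m z'⟫ + ‖spatial m z'‖ ^ 2 := by
      rw [norm_sub_sq_real]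
    have h0z := hz.2
    have h0z' := hz'.2
    rw [mink_eq_inner]
    nlinarith [mul_pos h0z h0z', sq_nonneg (z 0 * z' 0 + 1 + ⟪spatial m z, spatial m z'⟫),
      sq_nonneg (z 0 * z' 0 - 1 - ⟪spatial m z, spatial m z'⟫)]

lemma min_unique (μ : Measure Sp) [IsProbabilityMeasure μ] [NullSingletonClass μ]
    (hz : z ∈ Hyp m) (hz' : z' ∈ Hyp m)
    (hminz : ∀ w ∈ Hyp m, (∫ θ, Bus m z ↑θ ∂μ) ≤ ∫ θ, Bus m w ↑θ ∂μ)
    (hminz' : ∀ w ∈ Hyp m, (∫ θ, Bus m z' ↑θ ∂μ) ≤ ∫ θ, Bus m w ↑θ ∂μ) : z = z' := by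
  by_contra hne
  have hlt : mink m z z' < -1 := mink_lt_neg_one hz hz' hne
  set s0 : ℝ := Real.sqrt ((mink m z z') ^ 2 - 1) with hs0def
  have hs0pos : 0 < s0 := Real.sqrt_pos.mpr (by nlinarith)
  set T : ℝ := Real.arsinh s0 with hTdef
  have hsT : Real.sinh T = s0 := Real.sinh_arsinh s0
  have hTpos : 0 < T := Real.arsinh_pos_iff.mpr hs0pos
  have hsTpos : 0 < Real.sinh T := by rw [hsT]; exact hs0pos
  have hcT : Real.cosh T = -(mink m z z') := by
    rw [hTdef, Real.cosh_arsinh]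
    have h1 : 1 + s0 ^ 2 = (mink m z z') ^ 2 := by
      rw [hs0def, Real.sq_sqrt (by nlinarith)]
      ring
    rw [h1, Real.sqrt_sq_eq_abs, abs_of_neg (by linarith)]
  set w : Fin (m + 1) → ℝ := z' - Real.cosh T • z with hwdef
  have hwsum : w = (1:ℝ) • z' + (-(Real.cosh T)) • z := by
    funext i; simp [hwdef]; ring
  set v : Fin (m + 1) → ℝ := (Real.sinh T)⁻¹ • w with hvdef
  have hwz : mink m w z = 0 := by
    rw [hwsum, mink_add_smul, hz.1, mink_comm z' z, hcT]
    ring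
  have hv1 : mink m z v = 0 := by
    rw [mink_comm, hvdef, mink_smul, hwz]
    ring
  have hww : mink m w w = Real.sinh T ^ 2 := by
    have h1 : mink m z' w = -1 + Real.cosh T ^ 2 := by
      rw [mink_comm, hwsum, mink_add_smul, hz'.1, mink_comm z z', hcT, mink_comm z' z]
      ring
    have h2 : mink m w w = 1 * mink m z' w + (-(Real.cosh T)) * mink m z w := by
      rw [← mink_add_smul, ← hwsum]
    rw [h2, h1, mink_comm z w, hwz]
    have := Real.cosh_sq_sub_sinh_sq T
    nlinarith
  have hv2 : mink m v v = 1 := by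
    rw [hvdef, mink_smul, mink_comm, mink_smul, mink_comm, hww]
    field_simp
  have hgeodT : Real.cosh T • z + Real.sinh T • v = z' := by
    rw [hvdef, smul_smul, mul_inv_cancel₀ (ne_of_gt hsTpos), one_smul, hwdef]
    funext i; simp
  have hsc := part1 μ hz hv1 hv2
  have key := hsc.2 (Set.mem_univ (0:ℝ)) (Set.mem_univ T) (ne_of_lt hTpos)
    (by norm_num : (0:ℝ) < 1/2) (by norm_num : (0:ℝ) < 1/2) (by norm_num)
  simp only [smul_eq_mul] at key
  have hzero : Real.cosh ((1:ℝ)/2 * 0 + 1/2 * T) • z + Real.sinh (1/2 * 0 + 1/2 * T) • v ∈ Hyp m :=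
    geod_mem_hyp hz hv1 hv2 _
  have hf0 : (∫ θ, Bus m (Real.cosh 0 • z + Real.sinh 0 • v) ↑θ ∂μ) = ∫ θ, Bus m z ↑θ ∂μ := by
    have e : Real.cosh 0 • z + Real.sinh 0 • v = z := by
      rw [Real.cosh_zero, Real.sinh_zero]
      funext i; simp
    rw [e]
  have hfT : (∫ θ, Bus m (Real.cosh T • z + Real.sinh T • v) ↑θ ∂μ) = ∫ θ, Bus m z' ↑θ ∂μ := by
    rw [hgeodT]
  rw [hf0, hfT] at key
  have h1 : (∫ θ, Bus m z ↑θ ∂μ) ≤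
      ∫ θ, Bus m (Real.cosh ((1:ℝ)/2 * 0 + 1/2 * T) • z
        + Real.sinh ((1:ℝ)/2 * 0 + 1/2 * T) • v) ↑θ ∂μ :=
    hminz _ hzero
  have h2 : (∫ θ, Bus m z' ↑θ ∂μ) ≤ ∫ θ, Bus m z ↑θ ∂μ := hminz' z hz
  have h3 : (∫ θ, Bus m z ↑θ ∂μ) ≤ ∫ θ, Bus m z' ↑θ ∂μ := hminz z' hz'
  linarith

def basePt (m : ℕ) : Fin (m + 1) → ℝ := Fin.cons 1 0

lemma basePt_mem : basePt m ∈ Hyp m := by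
  constructor
  · simp [mink, basePt]
  · simp [basePt]

lemma bus_basePt (θ : EuclideanSpace ℝ (Fin m)) : Bus m (basePt m) θ = 0 := by
  have hsp : spatial m (basePt m) = 0 := by
    ext i
    simp [spatial, basePt]
  simp only [Bus]
  rw [mink_nullVec, hsp, inner_zero_left]
  simp [basePt]

lemma continuous_minkSelf : Continuous fun x : Fin (m + 1) → ℝ => mink m x x := by
  unfold mink
  exact (continuous_finset_sum _ fun i _ =>
    (continuous_apply i.succ).mul (continuous_apply i.succ)).sub
    ((continuous_apply 0).mul (continuous_apply 0))

theorem part3 (hm : 0 < m) (μ : Measure Sp) [IsProbabilityMeasure μ] [NullSingletonClass μ] :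
    ∃! z, z ∈ Hyp m ∧ ∀ w ∈ Hyp m, (∫ θ, Bus m z ↑θ ∂μ) ≤ ∫ θ, Bus m w ↑θ ∂μ := by
  obtain ⟨R, hR⟩ := part2 hm μ 0
  set R' : ℝ := max R 1 with hR'def
  have hR'1 : 1 ≤ R' := le_max_right _ _
  set K : Set (Fin (m + 1) → ℝ) :=
    (fun x : Fin (m + 1) → ℝ => mink m x x) ⁻¹' {(-1:ℝ)} ∩
      (fun x : Fin (m + 1) → ℝ => x 0) ⁻¹' Set.Icc 1 R' with hKdef
  have hKmem : ∀ x, x ∈ K ↔ mink m x x = -1 ∧ 1 ≤ x 0 ∧ x 0 ≤ R' := by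
    intro x
    simp [hKdef, Set.mem_Icc, and_assoc]
  have hKHyp : K ⊆ Hyp m := by
    intro x hx
    rw [hKmem] at hx
    exact ⟨hx.1, by linarith [hx.2.1]⟩
  have hKcl : IsClosed K :=
    (isClosed_singleton.preimage continuous_minkSelf).inter
      (isClosed_Icc.preimage (continuous_apply 0))
  have hsub : K ⊆ Metric.closedBall 0 R' := by
    intro x hx
    rw [hKmem] at hx
    obtain ⟨hx1, hx2, hx3⟩ := hx
    rw [Metric.mem_closedBall, dist_zero_right]
    rw [pi_norm_le_iff_of_nonneg (by linarith)]
    have hxhyp : x ∈ Hyp m := ⟨hx1, by linarith⟩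
    have hsq := hyp_sq hxhyp
    have hss : ‖spatial m x‖ ^ 2 = ∑ i : Fin m, x i.succ * x i.succ := by
      have h1 : mink m x x = (∑ i : Fin m, x i.succ * x i.succ) - x 0 * x 0 := rfl
      have h2 := mink_self x
      nlinarith
    intro i
    rw [Real.norm_eq_abs]
    refine Fin.cases ?_ ?_ i
    · rw [abs_le]
      exact ⟨by linarith, hx3⟩
    · intro j
      have hj : x j.succ * x j.succ ≤ ∑ i : Fin m, x i.succ * x i.succ :=
        Finset.single_le_sum (f := fun i : Fin m => x i.succ * x i.succ)
          (fun i _ => mul_self_nonneg _) (Finset.mem_univ j)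
      rw [abs_le]
      constructor
      · nlinarith
      · nlinarith
  have hKcomp : IsCompact K :=
    IsCompact.of_isClosed_subset (isCompact_closedBall 0 R') hKcl hsub
  have hbK : basePt m ∈ K := by
    rw [hKmem]
    refine ⟨basePt_mem.1, ?_, ?_⟩ <;> simp [basePt, hR'1]
  have hcontOn : ContinuousOn (fun x : Fin (m + 1) → ℝ => ∫ θ, Bus m x ↑θ ∂μ) K :=
    fun x hx => (continuousAt_avg μ (hKHyp hx)).continuousWithinAt
  obtain ⟨z, hzK, hzmin⟩ := hKcomp.exists_isMinOn ⟨basePt m, hbK⟩ hcontOn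
  have hbase0 : (∫ θ, Bus m (basePt m) ↑θ ∂μ) = 0 := by
    have : (fun θ : Sp => Bus m (basePt m) (θ : E)) = fun _ => 0 := by
      funext θ; exact bus_basePt _
    rw [this]
    simp
  have hglobal : ∀ w ∈ Hyp m, (∫ θ, Bus m z ↑θ ∂μ) ≤ ∫ θ, Bus m w ↑θ ∂μ := by
    intro w hw
    by_cases hw0 : w 0 ≤ R'
    · have hwK : w ∈ K := by
        rw [hKmem]
        exact ⟨hw.1, hyp_one_le hw, hw0⟩
      exact hzmin hwK
    · push_neg at hw0
      have h1 : R < w 0 := lt_of_le_of_lt (le_max_left _ _) hw0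
      have h2 : (0:ℝ) < ∫ θ, Bus m w ↑θ ∂μ := hR w hw h1
      have h3 : (∫ θ, Bus m z ↑θ ∂μ) ≤ ∫ θ, Bus m (basePt m) ↑θ ∂μ := hzmin hbK
      rw [hbase0] at h3
      linarith
  refine ⟨z, ⟨hKHyp hzK, hglobal⟩, ?_⟩
  intro y hy
  exact min_unique μ hy.1 (hKHyp hzK) hy.2 hglobal

end part3

end Bary

/-- The averaged Busemann function of an atomless probability measure `μ` on
`∂H^m`: it is strictly convex along every (unit-speed) geodesic, tends to `+∞`
at infinity, and admits a unique minimizer (the barycenter of `μ`). -/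
theorem stmt_12 (m : ℕ) (hm : 2 ≤ m)
    (μ : Measure (Metric.sphere (0 : EuclideanSpace ℝ (Fin m)) 1))
    [IsProbabilityMeasure μ] [NullSingletonClass μ] :
    (∀ x ∈ Hyp m, ∀ v : Fin (m + 1) → ℝ, mink m x v = 0 → mink m v v = 1 →
      StrictConvexOn ℝ Set.univ
        (fun t : ℝ => ∫ θ, Bus m (Real.cosh t • x + Real.sinh t • v) ↑θ ∂μ)) ∧
    (∀ C : ℝ, ∃ R : ℝ, ∀ x ∈ Hyp m, R < x 0 → C < ∫ θ, Bus m x ↑θ ∂μ) ∧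
    (∃! z, z ∈ Hyp m ∧ ∀ w ∈ Hyp m, (∫ θ, Bus m z ↑θ ∂μ) ≤ ∫ θ, Bus m w ↑θ ∂μ) := by
  have hm0 : 0 < m := by omega
  refine ⟨?_, ?_, ?_⟩
  · intro x hx v hv1 hv2
    exact Bary.part1 μ hx hv1 hv2
  · intro C
    exact Bary.part2 hm0 μ C
  · exact Bary.part3 hm0 μ
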